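/- Let N, T be positive integers, let b_min, b_max be reals with 0 < b_min ≤ b_max, let h_{it} (i = 1,…,N; t = 1,…,T) satisfy b_min ≤ h_{it} ≤ b_max, and let b be a real with 0 < b ≤ b_min·(1 + (max(N,T)/min(N,T))·(b_max/b_min))^{-1}. Define the N×N matrix H_{αα} := diag(Σ_t h_{1t},…,Σ_t h_{Nt}) + b·1_N 1_Nᵀ, the N×T matrix H_{αγ} with entries (H_{αγ})_{it} := h_{it} − b, the T×T matrix H_{γγ} := diag(Σ_i h_{i1},…,Σ_i h_{iT}) + b·1_T 1_Tᵀ, and H_{γα} := H_{αγ}ᵀ. Then H_{αα} and H_{γγ} are invertible, and ‖H_{αα}^{-1} H_{αγ}‖_∞ < 1 − b/b_max and ‖H_{γγ}^{-1} H_{γα}‖_∞ < 1 − b/b_max, where ‖·‖_∞ denotes the maximum absolute row sum of a matrix. -/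

import Mathlib

/-- Maximum absolute row sum of a matrix (the `ℓ_∞`-induced matrix norm). -/
noncomputable def rowSumNorm {m n : ℕ} (A : Matrix (Fin m) (Fin n) ℝ) : ℝ :=
  ⨆ i, ∑ j, |A i j|

/-- The `αα`-block `diag(Σ_t h_{it}) + b·1_N 1_Nᵀ` of the penalized expected Hessian. -/
noncomputable def Haa {N T : ℕ} (w : Fin N → Fin T → ℝ) (b : ℝ) :
    Matrix (Fin N) (Fin N) ℝ :=
  Matrix.diagonal (fun i => ∑ t, w i t) + Matrix.of fun _ _ => b

/-- The `αγ`-block with entries `h_{it} − b`. -/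
noncomputable def Hag {N T : ℕ} (w : Fin N → Fin T → ℝ) (b : ℝ) :
    Matrix (Fin N) (Fin T) ℝ :=
  Matrix.of fun i t => w i t - b

/-- The `γγ`-block `diag(Σ_i h_{it}) + b·1_T 1_Tᵀ` of the penalized expected Hessian. -/
noncomputable def Hgg {N T : ℕ} (w : Fin N → Fin T → ℝ) (b : ℝ) :
    Matrix (Fin T) (Fin T) ℝ :=
  Matrix.diagonal (fun t => ∑ i, w i t) + Matrix.of fun _ _ => b

lemma key_block {N T : ℕ} (hN : 0 < N) (hT : 0 < T)
    (bmin bmax b : ℝ) (hbmin : 0 < bmin) (hbb : bmin ≤ bmax)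
    (w : Fin N → Fin T → ℝ)
    (hlb : ∀ i t, bmin ≤ w i t) (hub : ∀ i t, w i t ≤ bmax)
    (hb0 : 0 < b)
    (hkey : b * N * bmax ≤ T * bmin * (bmin - b)) :
    IsUnit (Haa w b) ∧ rowSumNorm ((Haa w b)⁻¹ * Hag w b) < 1 - b / bmax := by
  haveI : Nonempty (Fin N) := ⟨⟨0, hN⟩⟩
  haveI : Nonempty (Fin T) := ⟨⟨0, hT⟩⟩
  have hNpos : (0:ℝ) < N := by exact_mod_cast hN
  have hTpos : (0:ℝ) < T := by exact_mod_cast hT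
  have hbmax : (0:ℝ) < bmax := lt_of_lt_of_le hbmin hbb
  have hbminb : b < bmin := by
    nlinarith [mul_pos (mul_pos hb0 hNpos) hbmax, mul_pos hTpos hbmin]
  set d : Fin N → ℝ := fun i => ∑ t, w i t with hd
  have hd_lb : ∀ i, (T:ℝ) * bmin ≤ d i := by
    intro i
    calc (T:ℝ) * bmin = ∑ _t : Fin T, bmin := by
          simp [Finset.sum_const, mul_comm]
      _ ≤ d i := Finset.sum_le_sum fun t _ => hlb i t
  have hd_ub : ∀ i, d i ≤ (T:ℝ) * bmax := by
    intro i
    calc d i ≤ ∑ _t : Fin T, bmax := Finset.sum_le_sum fun t _ => hub i t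
      _ = (T:ℝ) * bmax := by simp [Finset.sum_const, mul_comm]
  have hd_pos : ∀ i, 0 < d i := fun i => lt_of_lt_of_le (by positivity) (hd_lb i)
  have hdsum : ∀ i, ∑ t, (w i t - b) = d i - (T:ℝ) * b := by
    intro i
    rw [Finset.sum_sub_distrib, hd]
    simp [Finset.sum_const, mul_comm]
  clear_value d
  have hd' : ∀ i, ∑ t, w i t = d i := fun i => (congrFun hd i).symm
  set c : ℝ := ∑ k, (d k)⁻¹ with hc
  have hc0 : 0 ≤ c := Finset.sum_nonneg fun k _ => (inv_nonneg).mpr (hd_pos k).le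
  have hcsum : ∀ x : Fin N → ℝ, ∑ k, (d k)⁻¹ * x k ≤ 0 ∨ True := fun _ => Or.inr trivial
  have hden : 0 < 1 + b * c := by nlinarith
  set β : ℝ := b / (1 + b * c) with hβ
  have hβpos : 0 < β := div_pos hb0 hden
  have hβle : β ≤ b := by
    rw [hβ]; apply div_le_self hb0.le; nlinarith
  have hβeq : β * (1 + b * c) = b := div_mul_cancel₀ _ (ne_of_gt hden)
  clear_value β
  set B : Matrix (Fin N) (Fin N) ℝ :=
    Matrix.of (fun i j => (if i = j then (d i)⁻¹ else 0) - β * ((d i)⁻¹ * (d j)⁻¹)) with hB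
  have hAB : Haa w b * B = 1 := by
    ext i j
    have hdi := (hd_pos i).ne'
    have hdj := (hd_pos j).ne'
    simp only [Matrix.mul_apply, Haa, Matrix.add_apply, Matrix.diagonal_apply,
      Matrix.of_apply, hB, Matrix.one_apply, hd']
    have hexp : ∀ k : Fin N,
        ((if i = k then d i else 0) + b) *
          ((if k = j then (d k)⁻¹ else 0) - β * ((d k)⁻¹ * (d j)⁻¹))
        = (if i = k then d i * ((if k = j then (d k)⁻¹ else 0)
              - β * ((d k)⁻¹ * (d j)⁻¹)) else 0)
          + (b * (if k = j then (d k)⁻¹ else 0) - b * β * ((d k)⁻¹ * (d j)⁻¹)) := by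
      intro k; split <;> ring
    rw [Finset.sum_congr rfl fun k _ => hexp k]
    rw [Finset.sum_add_distrib, Finset.sum_sub_distrib]
    rw [Finset.sum_ite_eq Finset.univ i
      (fun k => d i * ((if k = j then (d k)⁻¹ else 0) - β * ((d k)⁻¹ * (d j)⁻¹)))]
    have h2 : ∑ k : Fin N, b * (if k = j then (d k)⁻¹ else 0) = b * (d j)⁻¹ := by
      rw [← Finset.mul_sum, Finset.sum_ite_eq' Finset.univ j (fun k => (d k)⁻¹)]
      simp
    have h3 : ∑ k : Fin N, b * β * ((d k)⁻¹ * (d j)⁻¹) = b * β * c * (d j)⁻¹ := by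
      simp only [hc, Finset.mul_sum, Finset.sum_mul]
      exact Finset.sum_congr rfl fun k _ => by ring
    rw [h2, h3]
    simp only [Finset.mem_univ, if_true]
    by_cases hij : i = j
    · subst hij
      simp only [if_pos rfl, ↓reduceIte]
      field_simp
      linear_combination (-1) * hβeq
    · simp only [if_neg hij]
      field_simp
      linear_combination (-1) * hβeq
  have hdet : IsUnit (Haa w b).det := by
    have h := congrArg Matrix.det hAB
    rw [Matrix.det_mul, Matrix.det_one] at h
    exact IsUnit.of_mul_eq_one _ h
  have hunit : IsUnit (Haa w b) := (Matrix.isUnit_iff_isUnit_det _).mpr hdet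
  have hinv : (Haa w b)⁻¹ = B := Matrix.inv_eq_right_inv hAB
  set u : Fin T → ℝ := fun t => ∑ j, (d j)⁻¹ * (w j t - b) with hu
  have hX : ∀ i t, ((Haa w b)⁻¹ * Hag w b) i t
      = (d i)⁻¹ * ((w i t - b) - β * u t) := by
    intro i t
    rw [hinv]
    simp only [Matrix.mul_apply, hB, Matrix.of_apply, Hag]
    have hexp2 : ∀ j : Fin N,
        ((if i = j then (d i)⁻¹ else 0) - β * ((d i)⁻¹ * (d j)⁻¹)) * (w j t - b)
        = (if i = j then (d i)⁻¹ * (w j t - b) else 0)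
          - β * ((d i)⁻¹ * (d j)⁻¹) * (w j t - b) := by
      intro j; split <;> ring
    rw [Finset.sum_congr rfl fun j _ => hexp2 j, Finset.sum_sub_distrib]
    rw [Finset.sum_ite_eq Finset.univ i (fun j => (d i)⁻¹ * (w j t - b))]
    have h4 : ∑ j, β * ((d i)⁻¹ * (d j)⁻¹) * (w j t - b)
        = β * (d i)⁻¹ * u t := by
      rw [hu, Finset.mul_sum]
      exact Finset.sum_congr rfl fun j _ => by ring
    rw [h4]
    simp only [Finset.mem_univ, if_true]
    ring
  have hu_pos : ∀ t, 0 < u t := by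
    intro t
    apply Finset.sum_pos (fun j _ => ?_) ⟨Classical.arbitrary _, Finset.mem_univ _⟩
    exact mul_pos (inv_pos.mpr (hd_pos j)) (by linarith [hlb j t])
  have hu_ub : ∀ t, u t ≤ (N:ℝ) * (((T:ℝ) * bmin)⁻¹ * bmax) := by
    intro t
    calc u t ≤ ∑ _j : Fin N, ((T:ℝ) * bmin)⁻¹ * bmax := by
          apply Finset.sum_le_sum
          intro j _
          apply mul_le_mul
          · exact inv_anti₀ (by positivity) (hd_lb j)
          · nlinarith [hub j t]
          · nlinarith [hlb j t]
          · positivity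
      _ = (N:ℝ) * (((T:ℝ) * bmin)⁻¹ * bmax) := by simp [Finset.sum_const, mul_comm]
  have hβu : ∀ t, β * u t ≤ bmin - b := by
    intro t
    have h1 : β * u t ≤ b * ((N:ℝ) * (((T:ℝ) * bmin)⁻¹ * bmax)) :=
      mul_le_mul hβle (hu_ub t) (hu_pos t).le hb0.le
    have h2 : b * ((N:ℝ) * (((T:ℝ) * bmin)⁻¹ * bmax)) ≤ bmin - b := by
      rw [div_eq_mul_inv] at *
      have hTb : (0:ℝ) < (T:ℝ) * bmin := by positivity
      calc b * ((N:ℝ) * (((T:ℝ) * bmin)⁻¹ * bmax))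
          = (b * (N:ℝ) * bmax) / ((T:ℝ) * bmin) := by ring
        _ ≤ ((T:ℝ) * bmin * (bmin - b)) / ((T:ℝ) * bmin) := by gcongr
        _ = bmin - b := by field_simp
    linarith
  have hXnn : ∀ i t, 0 ≤ ((Haa w b)⁻¹ * Hag w b) i t := by
    intro i t
    rw [hX i t]
    have h5 : β * u t ≤ w i t - b := le_trans (hβu t) (by linarith [hlb i t])
    have := (hd_pos i)
    have : (0:ℝ) ≤ (d i)⁻¹ := by positivity
    nlinarith
  have hrow : ∀ i, ∑ t, |((Haa w b)⁻¹ * Hag w b) i t| < 1 - b / bmax := by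
    intro i
    have habs : ∑ t, |((Haa w b)⁻¹ * Hag w b) i t|
        = ∑ t, ((Haa w b)⁻¹ * Hag w b) i t :=
      Finset.sum_congr rfl fun t _ => abs_of_nonneg (hXnn i t)
    have hsum : ∑ t, ((Haa w b)⁻¹ * Hag w b) i t
        = (d i)⁻¹ * ((d i - (T:ℝ) * b) - β * ∑ t, u t) := by
      rw [Finset.sum_congr rfl fun t _ => hX i t]
      rw [← Finset.mul_sum, Finset.sum_sub_distrib, hdsum i, ← Finset.mul_sum]
    have hS : 0 < ∑ t, u t :=
      Finset.sum_pos (fun t _ => hu_pos t) ⟨Classical.arbitrary _, Finset.mem_univ _⟩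
    have h6 : (d i)⁻¹ * ((d i - (T:ℝ) * b) - β * ∑ t, u t)
        < (d i)⁻¹ * (d i - (T:ℝ) * b) :=
      mul_lt_mul_of_pos_left (by nlinarith [mul_pos hβpos hS]) (inv_pos.mpr (hd_pos i))
    have h7 : (d i)⁻¹ * (d i - (T:ℝ) * b) ≤ 1 - b / bmax := by
      have hdi := (hd_pos i).ne'
      have e1 : (d i)⁻¹ * (d i - (T:ℝ) * b) = 1 - (T:ℝ) * b * (d i)⁻¹ := by
        field_simp
      have hinv2 : ((T:ℝ) * bmax)⁻¹ ≤ (d i)⁻¹ := by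
        apply inv_anti₀ (hd_pos i) (hd_ub i)
      have e2 : b / bmax ≤ (T:ℝ) * b * (d i)⁻¹ := by
        calc b / bmax = (T:ℝ) * b * ((T:ℝ) * bmax)⁻¹ := by
              rw [div_eq_mul_inv, mul_inv]
              field_simp
          _ ≤ (T:ℝ) * b * (d i)⁻¹ :=
              mul_le_mul_of_nonneg_left hinv2 (by positivity)
      linarith
    rw [habs, hsum]
    linarith
  obtain ⟨i0, hi0⟩ := Finite.exists_max
    (fun i => ∑ t, |((Haa w b)⁻¹ * Hag w b) i t|)
  refine ⟨hunit, lt_of_le_of_lt ?_ (hrow i0)⟩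
  exact ciSup_le hi0

/-- For weights `b_min ≤ h_{it} ≤ b_max` and penalty
`0 < b ≤ b_min·(1 + (max(N,T)/min(N,T))·(b_max/b_min))⁻¹`, the diagonal blocks
are invertible and `‖H_{αα}⁻¹ H_{αγ}‖_∞ < 1 − b/b_max`,
`‖H_{γγ}⁻¹ H_{γα}‖_∞ < 1 − b/b_max`. -/
theorem hessian_block_contraction {N T : ℕ} (hN : 0 < N) (hT : 0 < T)
    (bmin bmax b : ℝ) (hbmin : 0 < bmin) (hbb : bmin ≤ bmax)
    (w : Fin N → Fin T → ℝ)
    (hlb : ∀ i t, bmin ≤ w i t) (hub : ∀ i t, w i t ≤ bmax)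
    (hb0 : 0 < b)
    (hble : b ≤ bmin * (1 + ((max N T : ℕ) : ℝ) / ((min N T : ℕ) : ℝ) * (bmax / bmin))⁻¹) :
    IsUnit (Haa w b) ∧ IsUnit (Hgg w b) ∧
      rowSumNorm ((Haa w b)⁻¹ * Hag w b) < 1 - b / bmax ∧
      rowSumNorm ((Hgg w b)⁻¹ * (Hag w b).transpose) < 1 - b / bmax := by
  have hbmax : (0:ℝ) < bmax := lt_of_lt_of_le hbmin hbb
  set M : ℝ := ((max N T : ℕ) : ℝ) with hM
  set m : ℝ := ((min N T : ℕ) : ℝ) with hm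
  have hM0 : (0:ℝ) < M := by
    rw [hM]; exact_mod_cast lt_of_lt_of_le hN (le_max_left N T)
  have hm0 : (0:ℝ) < m := by
    rw [hm]; exact_mod_cast lt_min hN hT
  have hK : (0:ℝ) < 1 + M / m * (bmax / bmin) := by positivity
  have hbK : b * (1 + M / m * (bmax / bmin)) ≤ bmin := by
    rw [← div_eq_mul_inv] at hble
    exact (le_div_iff₀ hK).mp hble
  have hMm : b * (M / m) * (bmax / bmin) ≤ bmin - b := by
    have e : b * (1 + M / m * (bmax / bmin)) = b + b * (M / m) * (bmax / bmin) := by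
      ring
    linarith [hbK, e ▸ hbK]
  have hq : 0 < b * (M / m) * (bmax / bmin) := by positivity
  have hbminb : b < bmin := by linarith
  have key : b * M * bmax ≤ m * bmin * (bmin - b) := by
    have h := mul_le_mul_of_nonneg_right hMm (le_of_lt (mul_pos hm0 hbmin))
    have e : b * (M / m) * (bmax / bmin) * (m * bmin) = b * M * bmax := by
      field_simp
    rw [e] at h
    nlinarith [h]
  have hNM : (N:ℝ) ≤ M := by rw [hM]; exact_mod_cast le_max_left N T
  have hTM : (T:ℝ) ≤ M := by rw [hM]; exact_mod_cast le_max_right N T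
  have hmN : m ≤ (N:ℝ) := by rw [hm]; exact_mod_cast min_le_left N T
  have hmT : m ≤ (T:ℝ) := by rw [hm]; exact_mod_cast min_le_right N T
  have hsb : 0 < bmin - b := by linarith
  have hkey1 : b * (N:ℝ) * bmax ≤ (T:ℝ) * bmin * (bmin - b) := by
    nlinarith [key, mul_pos hb0 hbmax, mul_pos hbmin hsb]
  have hkey2 : b * (T:ℝ) * bmax ≤ (N:ℝ) * bmin * (bmin - b) := by
    nlinarith [key, mul_pos hb0 hbmax, mul_pos hbmin hsb]
  obtain ⟨h1, h2⟩ := key_block hN hT bmin bmax b hbmin hbb w hlb hub hb0 hkey1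
  obtain ⟨h3, h4⟩ := key_block hT hN bmin bmax b hbmin hbb (fun t i => w i t)
    (fun t i => hlb i t) (fun t i => hub i t) hb0 hkey2
  have e1 : Hgg w b = Haa (fun t i => w i t) b := rfl
  have e2 : (Hag w b).transpose = Hag (fun t i => w i t) b := rfl
  exact ⟨h1, e1 ▸ h3, h2, by rw [e1, e2]; exact h4⟩
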